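/- For every integer k ≥ 0 and every z ∈ ℂ∖[−1,1], (1/(2πi)) ∫_{−1}^{1} √(1−t²)·U_k(t)/(t−z) dt = (i/2)·(J₊⁻¹(z))^{k+1}. -/

import Mathlib

open MeasureTheory Filter Set Polynomial

open intervalIntegral

lemma cpow_half_mul_self (w : ℂ) : w ^ ((1:ℂ)/2) * w ^ ((1:ℂ)/2) = w := by
  have h := Complex.cpow_nat_inv_pow w (n := 2) (by norm_num)
  have h2 : ((2:ℕ):ℂ)⁻¹ = (1:ℂ)/2 := by norm_num
  rw [h2] at h
  rw [← sq]
  exact h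

lemma cpow_half_re (x : ℂ) (hx : x ≠ 0) :
    (x ^ ((1:ℂ)/2)).re
      = Real.exp (Real.log ‖x‖ / 2) * Real.cos (Complex.arg x / 2) := by
  rw [Complex.cpow_def_of_ne_zero hx, Complex.exp_re]
  congr 1
  · congr 1
    simp [Complex.mul_re, Complex.log_re]
    ring
  · congr 1
    simp [Complex.mul_im, Complex.log_im]
    ring

lemma cpow_half_im (x : ℂ) (hx : x ≠ 0) :
    (x ^ ((1:ℂ)/2)).im
      = Real.exp (Real.log ‖x‖ / 2) * Real.sin (Complex.arg x / 2) := by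
  rw [Complex.cpow_def_of_ne_zero hx, Complex.exp_im]
  congr 1
  · congr 1
    simp [Complex.mul_re, Complex.log_re]
    ring
  · congr 1
    simp [Complex.mul_im, Complex.log_im]
    ring

lemma cpow_half_of_im_ne (x : ℂ) (hx : x.im ≠ 0) :
    0 < (x ^ ((1:ℂ)/2)).re ∧ 0 < (x ^ ((1:ℂ)/2)).im * x.im := by
  have hx0 : x ≠ 0 := fun h => hx (by simp [h])
  have hE : 0 < Real.exp (Real.log ‖x‖ / 2) := Real.exp_pos _
  have harg1 : -Real.pi < Complex.arg x := Complex.neg_pi_lt_arg x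
  have harg2 : Complex.arg x < Real.pi := by
    rcases Complex.arg_lt_pi_iff.mpr (Or.inr hx) with h; exact h
  have hcos : 0 < Real.cos (Complex.arg x / 2) := by
    exact Real.cos_pos_of_mem_Ioo ⟨by linarith, by linarith⟩
  constructor
  · rw [cpow_half_re x hx0]; positivity
  · rw [cpow_half_im x hx0]
    rcases lt_or_gt_of_ne hx with hneg | hpos
    · have harg : Complex.arg x < 0 := Complex.arg_neg_iff.mpr hneg
      have hsin : Real.sin (Complex.arg x / 2) < 0 := by
        have := Real.sin_pos_of_pos_of_lt_pi (x := -(Complex.arg x / 2))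
          (by linarith) (by linarith)
        rw [Real.sin_neg] at this; linarith
      have : 0 < Real.exp (Real.log ‖x‖ / 2) * Real.sin (Complex.arg x / 2) * x.im :=
        mul_pos_of_neg_of_neg (by nlinarith) hneg
      linarith
  
    · have harg : 0 < Complex.arg x := by
        rcases (Complex.arg_nonneg_iff.mpr hpos.le).lt_or_eq with h | h
        · exact h
        · exact absurd (Complex.arg_eq_zero_iff.mp h.symm).2 hx
      have hsin : 0 < Real.sin (Complex.arg x / 2) :=
        Real.sin_pos_of_pos_of_lt_pi (by linarith) (by linarith)
      positivity

lemma integral_cos_mul_const {c : ℝ} (hc : c ≠ 0) :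
    (∫ x in (0:ℝ)..Real.pi, Real.cos (c*x)) = c⁻¹ * Real.sin (c*Real.pi) := by
  have h1 := mul_integral_comp_mul_left (a:=0) (b:=Real.pi) (c:=c) (f := fun x => Real.cos x)
  rw [integral_cos] at h1
  simp only [mul_zero, Real.sin_zero, sub_zero] at h1
  rw [← h1, inv_mul_cancel_left₀ hc]

lemma sin_ortho (m n : ℕ) (hm : m ≠ 0) :
    (∫ θ in (0:ℝ)..Real.pi, Real.sin (m*θ) * Real.sin (n*θ))
      = if n = m then Real.pi/2 else 0 := by
  by_cases h : n = m
  · subst h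
    simp only [if_pos rfl]
    have h1 := mul_integral_comp_mul_left (a:=0) (b:=Real.pi) (c:=(n:ℝ))
      (f := fun x => Real.sin x ^ 2)
    rw [integral_sin_sq] at h1
    simp only [mul_zero, Real.sin_zero, zero_mul, Real.sin_nat_mul_pi, sub_zero,
      zero_sub, neg_zero] at h1
    have hn' : (n:ℝ) ≠ 0 := Nat.cast_ne_zero.mpr hm
    have h2 : (∫ x in (0:ℝ)..Real.pi, Real.sin ((n:ℝ)*x) ^ 2) = Real.pi/2 := by
      have h3 : (n:ℝ) * ((∫ x in (0:ℝ)..Real.pi, Real.sin ((n:ℝ)*x) ^ 2) - Real.pi/2) = 0 := by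
        rw [mul_sub, h1]; ring
      rcases mul_eq_zero.mp h3 with h4 | h4
      · exact absurd h4 hn'
      · linarith
    rw [← h2]
    apply intervalIntegral.integral_congr
    intro x _
    simp [pow_two]
  · simp only [if_neg h]
    have key : ∀ θ:ℝ, Real.sin (m*θ) * Real.sin (n*θ)
        = (Real.cos (((m:ℝ)-n)*θ) - Real.cos (((m:ℝ)+n)*θ))/2 := by
      intro θ
      rw [show ((m:ℝ)-n)*θ = m*θ - n*θ by ring, show ((m:ℝ)+n)*θ = m*θ + n*θ by ring,
        Real.cos_sub, Real.cos_add]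
      ring
    simp_rw [key]
    have i1 : IntervalIntegrable (fun x => Real.cos (((m:ℝ)-n)*x)) MeasureTheory.volume 0 Real.pi :=
      (Real.continuous_cos.comp (continuous_const.mul continuous_id)).intervalIntegrable _ _
    have i2 : IntervalIntegrable (fun x => Real.cos (((m:ℝ)+n)*x)) MeasureTheory.volume 0 Real.pi :=
      (Real.continuous_cos.comp (continuous_const.mul continuous_id)).intervalIntegrable _ _
    have e1 : ((m:ℝ) - n) ≠ 0 := by
      rw [sub_ne_zero]
      exact_mod_cast Ne.symm h
    have e2 : ((m:ℝ) + n) ≠ 0 := by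
      have : (0:ℝ) < m := by exact_mod_cast Nat.pos_of_ne_zero hm
      positivity
    have hs1 : Real.sin (((m:ℝ)-n)*Real.pi) = 0 := by
      rw [show ((m:ℝ)-n)*Real.pi = ((m-n : ℤ):ℝ)*Real.pi by push_cast; ring,
        Real.sin_int_mul_pi]
    have hs2 : Real.sin (((m:ℝ)+n)*Real.pi) = 0 := by
      rw [show ((m:ℝ)+n)*Real.pi = ((m+n : ℕ):ℝ)*Real.pi by push_cast; ring,
        Real.sin_nat_mul_pi]
    rw [intervalIntegral.integral_div, intervalIntegral.integral_sub i1 i2,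
      integral_cos_mul_const e1, integral_cos_mul_const e2, hs1, hs2]
    simp

lemma exp_sub_exp_neg (θ : ℂ) :
    Complex.exp (θ*Complex.I) - Complex.exp (-θ*Complex.I)
      = 2*Complex.sin θ*Complex.I := by
  rw [Complex.exp_mul_I, Complex.exp_mul_I, Complex.cos_neg, Complex.sin_neg]
  ring

lemma exp_add_exp_neg (θ : ℂ) :
    Complex.exp (θ*Complex.I) + Complex.exp (-θ*Complex.I) = 2*Complex.cos θ := by
  rw [Complex.exp_mul_I, Complex.exp_mul_I, Complex.cos_neg, Complex.sin_neg]
  ring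

lemma hasSum_pointwise (k : ℕ) (z w : ℂ) (hw0 : w ≠ 0) (hrel : w * (2*z - w) = 1)
    (hwlt : ‖w‖ < 1) (x : ℝ) (hden : ((Real.cos x : ℝ) : ℂ) ≠ z) :
    HasSum (fun n : ℕ => (-2:ℂ) * (Real.sin ((k+1)*x) : ℝ) * (w^n * ((Real.sin (n*x) : ℝ) : ℂ)))
      (((Real.sin ((k+1)*x) : ℝ) : ℂ) * ((Real.sin x : ℝ) : ℂ) / (((Real.cos x : ℝ) : ℂ) - z)) := by
  set S : ℂ := ((Real.sin ((k+1)*x) : ℝ) : ℂ) with hS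
  set E : ℂ := Complex.exp ((x:ℂ) * Complex.I) with hE
  have hE0 : E ≠ 0 := Complex.exp_ne_zero _
  have hEabs : ‖E‖ = 1 := Complex.norm_exp_ofReal_mul_I x
  have hEinv : E⁻¹ = Complex.exp (-(x:ℂ) * Complex.I) := by
    rw [hE, ← Complex.exp_neg]
    ring_nf
  have hnorm1 : ‖w * E‖ < 1 := by
    rw [norm_mul, hEabs, mul_one]
    exact hwlt
  have hnorm2 : ‖w * E⁻¹‖ < 1 := by
    rw [norm_mul, norm_inv, hEabs, inv_one, mul_one]
    exact hwlt
  have d1 : 1 - w*E ≠ 0 := by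
    intro h
    have : w*E = 1 := by linear_combination -h
    rw [this, norm_one] at hnorm1
    exact lt_irrefl _ hnorm1
  have d2 : 1 - w*E⁻¹ ≠ 0 := by
    intro h
    have : w*E⁻¹ = 1 := by linear_combination -h
    rw [this, norm_one] at hnorm2
    exact lt_irrefl _ hnorm2
  have h1 := hasSum_geometric_of_norm_lt_one hnorm1
  have h2 := hasSum_geometric_of_norm_lt_one hnorm2
  have h3 := (h1.sub h2).mul_left (Complex.I * S)
  have hcos : ((Real.cos x : ℝ) : ℂ) = (E + E⁻¹)/2 := by
    rw [hEinv, hE, exp_add_exp_neg, Complex.ofReal_cos]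
    ring
  have hsin : ((Real.sin x : ℝ) : ℂ) = -(E - E⁻¹)*Complex.I/2 := by
    rw [hEinv, hE, exp_sub_exp_neg, Complex.ofReal_sin]
    have hI := Complex.I_mul_I
    linear_combination (Complex.sin (x:ℂ)) * hI
  have hfun : (fun n : ℕ => Complex.I * S * ((w*E)^n - (w*E⁻¹)^n))
      = (fun n : ℕ => (-2:ℂ) * S * (w^n * ((Real.sin (n*x) : ℝ) : ℂ))) := by
    funext n
    have hEn : E^n = Complex.exp ((n*x : ℝ) * Complex.I) := by
      rw [hE, ← Complex.exp_nat_mul]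
      push_cast
      ring_nf
    have hEn' : (E⁻¹)^n = Complex.exp (-((n*x : ℝ):ℂ) * Complex.I) := by
      rw [inv_pow, hEn, ← Complex.exp_neg]
      congr 1
      ring
    have hkey : E^n - (E⁻¹)^n = 2*Complex.sin ((n*x : ℝ):ℂ)*Complex.I := by
      rw [hEn, hEn', exp_sub_exp_neg]
    have hI := Complex.I_mul_I
    rw [mul_pow, mul_pow]
    rw [Complex.ofReal_sin]
    linear_combination (Complex.I * S * w^n) * hkey + (2 * S * w^n * Complex.sin ((n*x:ℝ):ℂ)) * hI
  have hcden : ((Real.cos x : ℝ) : ℂ) - z ≠ 0 := sub_ne_zero.mpr hden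
  have hzeq : z = (1 + w*w)/(2*w) := by
    field_simp
    linear_combination hrel
  have hval : Complex.I * S * ((1 - w*E)⁻¹ - (1 - w*E⁻¹)⁻¹)
      = S * ((Real.sin x : ℝ) : ℂ) / (((Real.cos x : ℝ) : ℂ) - z) := by
    have hfactor : (1:ℂ) - w*E⁻¹ = (E - w) * E⁻¹ := by field_simp
    have d3 : E - w ≠ 0 := fun h => d2 (by rw [hfactor, h, zero_mul])
    rw [eq_div_iff hcden]
    rw [hcos, hsin, hzeq]
    field_simp [hw0, hE0, d1, d3]
    ring
  rw [hfun, hval] at h3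
  exact h3

/-- The inverse Joukowsky transform mapping the slit plane to the unit disk,
`J₊⁻¹(z) = z - (z-1)^{1/2} (z+1)^{1/2}` with principal-branch square roots. -/
noncomputable def Jinv (z : ℂ) : ℂ :=
  z - (z - 1) ^ ((1 : ℂ) / 2) * (z + 1) ^ ((1 : ℂ) / 2)

lemma Jinv_mul (z : ℂ) : Jinv z * (2*z - Jinv z) = 1 := by
  unfold Jinv
  have h1 := cpow_half_mul_self (z-1)
  have h2 := cpow_half_mul_self (z+1)
  linear_combination (-((z+1) ^ ((1:ℂ)/2) * (z+1) ^ ((1:ℂ)/2))) * h1 + (-(z-1)) * h2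

lemma norm_Jinv_lt_one (z : ℂ) (hz : z ∉ Complex.ofReal '' Set.Icc (-1 : ℝ) 1) :
    ‖Jinv z‖ < 1 := by
  set a := (z - 1) ^ ((1:ℂ)/2) with ha
  set b := (z + 1) ^ ((1:ℂ)/2) with hb
  have ha2 : a * a = z - 1 := cpow_half_mul_self _
  have hb2 : b * b = z + 1 := cpow_half_mul_self _
  have hdot : 0 < a.re * b.re + a.im * b.im := by
    by_cases him : z.im = 0
    · have hre : z = ((z.re : ℝ) : ℂ) := by
        apply Complex.ext <;> simp [him]
      have hx : z.re < -1 ∨ 1 < z.re := by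
        by_contra h
        push_neg at h
        exact hz ⟨z.re, ⟨by linarith [h.1], by linarith [h.2]⟩, hre.symm⟩
      have hcast : ((1:ℂ)/2) = (((1:ℝ)/2 : ℝ) : ℂ) := by push_cast; ring
      rcases hx with hlt | hgt
      · -- z.re < -1 : both z-1 and z+1 negative reals
        have hm1 : z - 1 = (((z.re - 1 : ℝ)) : ℂ) := by apply Complex.ext <;> simp [him]
        have hp1 : z + 1 = (((z.re + 1 : ℝ)) : ℂ) := by apply Complex.ext <;> simp [him]
        have hne1 : z - 1 ≠ 0 := by rw [hm1]; exact Complex.ofReal_ne_zero.mpr (by linarith)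
        have hne2 : z + 1 ≠ 0 := by rw [hp1]; exact Complex.ofReal_ne_zero.mpr (by linarith)
        have harg1 : Complex.arg (z - 1) = Real.pi := by
          rw [hm1]; exact Complex.arg_ofReal_of_neg (by linarith)
        have harg2 : Complex.arg (z + 1) = Real.pi := by
          rw [hp1]; exact Complex.arg_ofReal_of_neg (by linarith)
        have hare : a.re = 0 := by
          rw [ha, cpow_half_re _ hne1, harg1, Real.cos_pi_div_two, mul_zero]
        have hbre : b.re = 0 := by
          rw [hb, cpow_half_re _ hne2, harg2, Real.cos_pi_div_two, mul_zero]
        have haim : 0 < a.im := by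
          rw [ha, cpow_half_im _ hne1, harg1, Real.sin_pi_div_two, mul_one]
          exact Real.exp_pos _
        have hbim : 0 < b.im := by
          rw [hb, cpow_half_im _ hne2, harg2, Real.sin_pi_div_two, mul_one]
          exact Real.exp_pos _
        rw [hare]
        nlinarith [mul_pos haim hbim]
      · -- 1 < z.re : both positive reals
        have hm1 : z - 1 = (((z.re - 1 : ℝ)) : ℂ) := by apply Complex.ext <;> simp [him]
        have hp1 : z + 1 = (((z.re + 1 : ℝ)) : ℂ) := by apply Complex.ext <;> simp [him]
        have hA : a = (((z.re - 1) ^ ((1:ℝ)/2) : ℝ) : ℂ) := by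
          rw [ha, hm1, hcast, Complex.ofReal_cpow (by linarith)]
        have hB : b = (((z.re + 1) ^ ((1:ℝ)/2) : ℝ) : ℂ) := by
          rw [hb, hp1, hcast, Complex.ofReal_cpow (by linarith)]
        rw [hA, hB]
        simp only [Complex.ofReal_re, Complex.ofReal_im, mul_zero, add_zero]
        have h1 : (0:ℝ) < (z.re - 1) ^ ((1:ℝ)/2) := Real.rpow_pos_of_pos (by linarith) _
        have h2 : (0:ℝ) < (z.re + 1) ^ ((1:ℝ)/2) := Real.rpow_pos_of_pos (by linarith) _
        nlinarith
    · have h1 := cpow_half_of_im_ne (z-1) (by simpa using him)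
      have h2 := cpow_half_of_im_ne (z+1) (by simpa using him)
      rw [← ha] at h1
      rw [← hb] at h2
      simp only [Complex.sub_im, Complex.add_im, Complex.one_im, sub_zero, add_zero] at h1 h2
      have haim : 0 < a.im * b.im := by nlinarith [mul_pos h1.2 h2.2, sq_nonneg z.im, mul_self_nonneg z.im]
      nlinarith [mul_pos h1.1 h2.1]
  have ha0 : a ≠ 0 := by
    intro h
    rw [h, mul_zero] at ha2
    apply hz ⟨1, by norm_num, by push_cast; linear_combination ha2⟩
  have hb0 : b ≠ 0 := by
    intro h
    rw [h, mul_zero] at hb2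
    apply hz ⟨-1, by norm_num, by push_cast; linear_combination hb2⟩
  have hres : 0 < (z * (starRingEnd ℂ) (a * b)).re := by
    have h2z : z + z = a*a + b*b := by rw [ha2, hb2]; ring
    have hkey : ((z+z) * (starRingEnd ℂ) (a*b)).re
        = (Complex.normSq a + Complex.normSq b) * (a.re*b.re + a.im*b.im) := by
      rw [h2z]
      simp only [Complex.mul_re, Complex.mul_im, Complex.add_re, Complex.add_im,
        Complex.normSq_apply, Complex.conj_re, Complex.conj_im]
      ring
    have hre2 : ((z+z) * (starRingEnd ℂ) (a*b)).re = 2 * (z * (starRingEnd ℂ) (a*b)).re := by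
      rw [add_mul, Complex.add_re]; ring
    have hab : 0 < Complex.normSq a + Complex.normSq b := by
      have := Complex.normSq_pos.mpr ha0
      have := Complex.normSq_pos.mpr hb0
      linarith
    nlinarith [mul_pos hab hdot]
  set s := a * b with hs
  have e1 : Complex.normSq (z - s) = Complex.normSq z + Complex.normSq s - 2*(z * (starRingEnd ℂ) s).re := by
    simp only [Complex.normSq_apply, Complex.mul_re, Complex.sub_re, Complex.sub_im,
      Complex.conj_re, Complex.conj_im]
    ring
  have e2 : Complex.normSq (z + s) = Complex.normSq z + Complex.normSq s + 2*(z * (starRingEnd ℂ) s).re := by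
    simp only [Complex.normSq_apply, Complex.mul_re, Complex.add_re, Complex.add_im,
      Complex.conj_re, Complex.conj_im]
    ring
  have hlt : ‖z - s‖ < ‖z + s‖ := by
    have h1 : Complex.normSq (z - s) < Complex.normSq (z + s) := by linarith
    rw [Complex.normSq_eq_norm_sq, Complex.normSq_eq_norm_sq] at h1
    have := norm_nonneg (z - s)
    have := norm_nonneg (z + s)
    nlinarith
  have hprod : ‖z - s‖ * ‖z + s‖ = 1 := by
    rw [← norm_mul]
    have : (z - s) * (z + s) = 1 := by
      have := Jinv_mul z
      unfold Jinv at this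
      rw [← ha, ← hb, ← hs] at this
      linear_combination this
    rw [this, norm_one]
  have : Jinv z = z - s := by unfold Jinv; rw [← ha, ← hb, ← hs]
  rw [this]
  nlinarith [norm_nonneg (z - s), norm_nonneg (z + s)]

/-- Cauchy transform of weighted Chebyshev polynomials of the second kind:
`𝒞[√(1-t²) U_k](z) = (i/2)·J₊⁻¹(z)^{k+1}` for `z ∈ ℂ∖[-1,1]`. -/
theorem cauchy_transform_weighted_chebyshevU (k : ℕ) (z : ℂ)
    (hz : z ∉ Complex.ofReal '' Set.Icc (-1 : ℝ) 1) :
    (1 / (2 * (Real.pi : ℂ) * Complex.I)) *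
        ∫ t in (-1 : ℝ)..1,
          (Real.sqrt (1 - t ^ 2) : ℂ) * (Polynomial.Chebyshev.U ℂ k).eval (t : ℂ)
            / ((t : ℂ) - z)
      = (Complex.I / 2) * (Jinv z) ^ (k + 1) := by
  set w : ℂ := Jinv z with hw
  have hrel : w * (2*z - w) = 1 := Jinv_mul z
  have hw0 : w ≠ 0 := by
    intro h
    rw [h, zero_mul] at hrel
    exact zero_ne_one hrel
  have hwlt : ‖w‖ < 1 := norm_Jinv_lt_one z hz
  have hden : ∀ t : ℝ, t ∈ Set.Icc (-1:ℝ) 1 → ((t:ℝ):ℂ) ≠ z := fun t ht h => hz ⟨t, ht, h⟩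
  have hdenc : ∀ x : ℝ, ((Real.cos x : ℝ):ℂ) ≠ z :=
    fun x => hden _ ⟨Real.neg_one_le_cos x, Real.cos_le_one x⟩
  set g : ℝ → ℂ := fun t =>
    (Real.sqrt (1 - t ^ 2) : ℝ) * (Polynomial.Chebyshev.U ℂ k).eval (t : ℂ) / ((t : ℂ) - z)
    with hg
  set F : ℝ → ℂ := fun x =>
    ((Real.sin ((k+1)*x) : ℝ) : ℂ) * ((Real.sin x : ℝ) : ℂ) / (((Real.cos x : ℝ) : ℂ) - z)
    with hF
  have hgcont : ContinuousOn g (Set.Icc (-1:ℝ) 1) := by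
    apply ContinuousOn.div
    · apply Continuous.continuousOn
      exact (Complex.continuous_ofReal.comp
          (Real.continuous_sqrt.comp (by continuity))).mul
        ((Polynomial.Chebyshev.U ℂ k).continuous.comp Complex.continuous_ofReal)
    · exact (Complex.continuous_ofReal.sub continuous_const).continuousOn
    · exact fun t ht => sub_ne_zero.mpr (hden t ht)
  -- substitution t = cos x
  have hsub : (∫ t in (-1:ℝ)..1, g t) = ∫ x in (0:ℝ)..Real.pi, Real.sin x • g (Real.cos x) := by
    have himg : Real.cos '' (Set.uIcc 0 Real.pi) ⊆ Set.Icc (-1:ℝ) 1 := by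
      rintro y ⟨x, -, rfl⟩
      exact ⟨Real.neg_one_le_cos x, Real.cos_le_one x⟩
    have h := intervalIntegral.integral_comp_smul_deriv' (a := 0) (b := Real.pi)
      (f := Real.cos) (f' := fun x => -Real.sin x) (g := g)
      (fun x _ => Real.hasDerivAt_cos x) (Real.continuous_sin.neg.continuousOn)
      (hgcont.mono himg)
    rw [Real.cos_zero, Real.cos_pi] at h
    have h2 : (∫ u in (1:ℝ)..(-1:ℝ), g u) = - ∫ u in (-1:ℝ)..1, g u :=
      intervalIntegral.integral_symm _ _
    have h3 : (∫ x in (0:ℝ)..Real.pi, (-Real.sin x) • (g ∘ Real.cos) x)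
        = - ∫ x in (0:ℝ)..Real.pi, Real.sin x • g (Real.cos x) := by
      rw [← intervalIntegral.integral_neg]
      congr 1
      funext x
      simp [neg_smul]
    rw [h3, h2] at h
    linear_combination h
  have hFeq : ∀ x ∈ Set.uIcc (0:ℝ) Real.pi, Real.sin x • g (Real.cos x) = F x := by
    intro x hx
    rw [Set.uIcc_of_le Real.pi_pos.le] at hx
    have hsx : 0 ≤ Real.sin x := Real.sin_nonneg_of_nonneg_of_le_pi hx.1 hx.2
    have hsqrt : Real.sqrt (1 - Real.cos x ^ 2) = Real.sin x := by
      rw [← Real.sin_sq x, Real.sqrt_sq hsx]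
    have hU : (Polynomial.Chebyshev.U ℂ (k:ℤ)).eval ((Real.cos x : ℝ):ℂ) * ((Real.sin x:ℝ):ℂ)
        = ((Real.sin ((k+1)*x) : ℝ):ℂ) := by
      rw [Complex.ofReal_cos, Complex.ofReal_sin, Polynomial.Chebyshev.U_complex_cos,
        Complex.ofReal_sin]
      congr 1
      push_cast
      ring
    have hne : (((Real.cos x : ℝ)):ℂ) - z ≠ 0 := sub_ne_zero.mpr (hdenc x)
    rw [hg, hF]
    simp only [Complex.real_smul]
    rw [hsqrt]
    rw [← mul_div_assoc, div_eq_div_iff hne hne]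
    linear_combination (((Real.sin x : ℝ):ℂ) * (((Real.cos x : ℝ):ℂ) - z)) * hU
  have hswap : HasSum
      (fun n : ℕ => ∫ x in (0:ℝ)..Real.pi,
        (-2:ℂ) * (Real.sin ((k+1)*x) : ℝ) * (w^n * ((Real.sin (n*x) : ℝ) : ℂ)))
      (∫ x in (0:ℝ)..Real.pi, F x) := by
    apply intervalIntegral.hasSum_integral_of_dominated_convergence
      (bound := fun n _ => 2 * ‖w‖^n)
    · intro n
      apply Continuous.aestronglyMeasurable
      fun_prop
    · intro n
      filter_upwards with t _
      have hs1 : |Real.sin ((k+1)*t)| ≤ 1 :=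
        abs_le.mpr ⟨Real.neg_one_le_sin _, Real.sin_le_one _⟩
      have hs2 : |Real.sin ((n:ℝ)*t)| ≤ 1 :=
        abs_le.mpr ⟨Real.neg_one_le_sin _, Real.sin_le_one _⟩
      have hwn : (0:ℝ) ≤ ‖w‖^n := pow_nonneg (norm_nonneg _) _
      simp only [norm_mul, Complex.norm_real, Real.norm_eq_abs, norm_pow, norm_neg]
      have h2 : ‖(2:ℂ)‖ = 2 := by norm_num
      rw [h2]
      have h3 : |Real.sin ((k+1)*t)| * |Real.sin ((n:ℝ)*t)| ≤ 1 :=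
        mul_le_one₀ hs1 (abs_nonneg _) hs2
      nlinarith [h3, hwn]
    · filter_upwards with t _
      exact (summable_geometric_of_lt_one (norm_nonneg w) hwlt).mul_left 2
    · exact intervalIntegrable_const
    · filter_upwards with x _
      exact hasSum_pointwise k z w hw0 hrel hwlt x (hdenc x)
  have hint : ∀ n : ℕ, (∫ x in (0:ℝ)..Real.pi,
      (-2:ℂ) * (Real.sin ((k+1)*x) : ℝ) * (w^n * ((Real.sin (n*x) : ℝ) : ℂ)))
      = if n = k+1 then (-(Real.pi:ℂ)) * w^(k+1) else 0 := by
    intro n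
    have heq : (fun x : ℝ => (-2:ℂ) * (Real.sin ((k+1)*x) : ℝ) * (w^n * ((Real.sin (n*x) : ℝ) : ℂ)))
        = fun x : ℝ => ((-2:ℂ) * w^n) * ((Real.sin ((k+1)*x) * Real.sin ((n:ℝ)*x) : ℝ) : ℂ) := by
      funext x
      push_cast
      ring
    rw [heq, intervalIntegral.integral_const_mul, intervalIntegral.integral_ofReal]
    have horth := sin_ortho (k+1) n (Nat.succ_ne_zero k)
    push_cast at horth ⊢
    rw [horth]
    by_cases h : n = k+1
    · rw [if_pos h, if_pos h, h]
      push_cast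
      ring
    · rw [if_neg h, if_neg h]
      push_cast
      ring
  simp only [hint] at hswap
  have hval : (∫ x in (0:ℝ)..Real.pi, F x) = (-(Real.pi:ℂ)) * w^(k+1) :=
    hswap.unique (hasSum_ite_eq (k+1) _)
  have hfinal : (∫ t in (-1:ℝ)..1, g t) = (-(Real.pi:ℂ)) * w^(k+1) := by
    rw [hsub, intervalIntegral.integral_congr hFeq, hval]
  rw [hg] at hfinal
  rw [hfinal]
  have hπ : ((Real.pi:ℝ):ℂ) ≠ 0 := Complex.ofReal_ne_zero.mpr Real.pi_ne_zero
  have hI := Complex.I_mul_I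
  field_simp
  linear_combination (-1:ℂ) * hI
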